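/- The L-structure F²_ℚ, whose universe is the set of all lines in the Euclidean plane that contain at least two distinct points with rational coordinates, with the binary relation O interpreted as perpendicularity of lines, is a model of the theory SAPP. -/

import Mathlib

open FirstOrder Language Structure BoundedFormula

/-- The relation symbols of the language `L`: a single binary relation `O`. -/
inductive PerpRel : ℕ → Type
  | o : PerpRel 2

/-- The first-order language with a single binary relation symbol `O`. -/
def L : Language := ⟨fun _ => Empty, PerpRel⟩
  deriving IsRelational

/-- The binary relation symbol `O` of `L`. -/
abbrev oSym : L.Relations 2 := .o

/-- `O(xᵢ, xⱼ)` as a bounded formula. -/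
def oBF {n : ℕ} (i j : Fin n) : L.BoundedFormula Empty n :=
  oSym.boundedFormula₂ (&i) (&j)

/-- Finite conjunction of a list of bounded formulas. -/
def andAll {n : ℕ} : List (L.BoundedFormula Empty n) → L.BoundedFormula Empty n
  | [] => ⊤
  | φ :: l => φ ⊓ andAll l

/-- λ₁ₙ : ∀y₁…∀yₙ∀s(O(s,y₁) ∧ … ∧ O(s,yₙ) → ∃t(t ≠ y₁ ∧ … ∧ t ≠ yₙ ∧ O(s,t))).
Variables: y₁,…,yₙ are de Bruijn indices 0,…,n-1, s is index n, t is index n+1. -/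
def lam1 (n : ℕ) : L.Sentence :=
  ((andAll ((List.finRange n).map fun i => oBF (Fin.last n) i.castSucc)).imp
    ((andAll ((List.finRange n).map fun i =>
        ∼((&(Fin.last (n + 1))) =' (&(i.castSucc.castSucc)))) ⊓
      oBF ((Fin.last n).castSucc) (Fin.last (n + 1))).ex)).alls

/-- λ₂ₙ : ∀y₁…∀yₙ∃s(¬O(s,y₁) ∧ … ∧ ¬O(s,yₙ)).
Variables: y₁,…,yₙ are de Bruijn indices 0,…,n-1, s is index n. -/
def lam2 (n : ℕ) : L.Sentence :=
  ((andAll ((List.finRange n).map fun i => ∼(oBF (Fin.last n) i.castSucc))).ex).alls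

/-- λ₃ : ∀x ¬O(x,x). -/
def lam3 : L.Sentence := (∼(oBF (0 : Fin 1) 0)).alls

/-- λ₄ : ∀x∀y(O(x,y) → O(y,x)). -/
def lam4 : L.Sentence := ((oBF (0 : Fin 2) 1).imp (oBF (1 : Fin 2) 0)).alls

/-- λ₅ : ∀x∃y O(x,y). -/
def lam5 : L.Sentence := ((oBF (0 : Fin 2) 1).ex).alls

/-- λ₆ : ∀x∀y∀z∀t(O(x,z) ∧ O(y,z) ∧ O(x,t) → O(y,t)). -/
def lam6 : L.Sentence :=
  ((oBF (0 : Fin 4) 2 ⊓ oBF (1 : Fin 4) 2 ⊓ oBF (0 : Fin 4) 3).imp (oBF (1 : Fin 4) 3)).alls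

/-- The theory SAPP. -/
def SAPP : L.Theory :=
  {φ | ∃ n, 1 ≤ n ∧ φ = lam1 n} ∪ {φ | ∃ n, 2 ≤ n ∧ φ = lam2 n} ∪ {lam3, lam4, lam5, lam6}

/-- The Euclidean plane ℝ². -/
abbrev Plane := EuclideanSpace ℝ (Fin 2)

/-- A line in the Euclidean plane: a one-dimensional affine subspace of ℝ². -/
structure Line where
  carrier : AffineSubspace ℝ Plane
  one_dim : Module.finrank ℝ carrier.direction = 1

/-- Two lines are perpendicular iff their direction subspaces are orthogonal. -/
def Line.Perp (a b : Line) : Prop :=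
  a.carrier.direction ⟂ b.carrier.direction

/-- A point of the plane has rational coordinates. -/
def HasRatCoords (p : Plane) : Prop := ∀ i, ∃ q : ℚ, p i = (q : ℝ)

/-- The universe of F²_ℚ: lines containing at least two distinct points with rational
coordinates. -/
def QLine : Type :=
  {a : Line // ∃ p q : Plane, p ≠ q ∧ p ∈ a.carrier ∧ q ∈ a.carrier ∧
    HasRatCoords p ∧ HasRatCoords q}

/-- The structure F²_ℚ, with O interpreted as perpendicularity. -/
instance : L.Structure QLine where
  RelMap | .o => fun x => Line.Perp (x 0).val (x 1).val


/-! ### Auxiliary material -/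

section Aux

open Module Submodule RealInnerProductSpace

/-! #### Geometry -/

lemma plane_ext {v w : Plane} (h0 : v 0 = w 0) (h1 : v 1 = w 1) : v = w :=
  PiLp.ext fun (i : Fin 2) => match i with | 0 => h0 | 1 => h1

lemma inner_eval (x y : Plane) : ⟪x, y⟫ = x 0 * y 0 + x 1 * y 1 := by
  simp [PiLp.inner_apply, Fin.sum_univ_two, RCLike.inner_apply]; ring

lemma HasRatCoords.add {p q : Plane} (hp : HasRatCoords p) (hq : HasRatCoords q) :
    HasRatCoords (p + q) := fun i => by
  obtain ⟨a, ha⟩ := hp i; obtain ⟨b, hb⟩ := hq i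
  exact ⟨a + b, by show p i + q i = _; rw [ha, hb]; push_cast; ring⟩

lemma HasRatCoords.sub {p q : Plane} (hp : HasRatCoords p) (hq : HasRatCoords q) :
    HasRatCoords (p - q) := fun i => by
  obtain ⟨a, ha⟩ := hp i; obtain ⟨b, hb⟩ := hq i
  exact ⟨a - b, by show p i - q i = _; rw [ha, hb]; push_cast; ring⟩

lemma HasRatCoords.ratSMul {p : Plane} (hp : HasRatCoords p) (c : ℚ) :
    HasRatCoords ((c : ℝ) • p) := fun i => by
  obtain ⟨a, ha⟩ := hp i
  exact ⟨c * a, by show (c : ℝ) * p i = _; rw [ha]; push_cast; ring⟩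

/-- Rotation by 90 degrees. -/
def rot (v : Plane) : Plane := !₂[-(v 1), v 0]

lemma rot_apply0 (v : Plane) : rot v 0 = -(v 1) := rfl
lemma rot_apply1 (v : Plane) : rot v 1 = v 0 := rfl

lemma rot_ne_zero {v : Plane} (h : v ≠ 0) : rot v ≠ 0 := by
  intro hr
  refine h (plane_ext ?_ ?_)
  · have : rot v 1 = 0 := by rw [hr]; rfl
    simpa [rot_apply1] using this
  · have : rot v 0 = 0 := by rw [hr]; rfl
    simpa [rot_apply0] using this

lemma HasRatCoords.rot {v : Plane} (hv : HasRatCoords v) : HasRatCoords (_root_.rot v) :=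
  fun i => match i with
  | 0 => by obtain ⟨a, ha⟩ := hv 1; exact ⟨-a, by rw [rot_apply0, ha]; push_cast; ring⟩
  | 1 => by obtain ⟨a, ha⟩ := hv 0; exact ⟨a, by rw [rot_apply1, ha]⟩

lemma inner_rot (v : Plane) : ⟪v, rot v⟫ = 0 := by
  rw [inner_eval, rot_apply0, rot_apply1]; ring

/-- The direction of a rational line. -/
noncomputable def dirL (a : QLine) : Submodule ℝ Plane := a.val.carrier.direction

lemma dirL_finrank (a : QLine) : finrank ℝ (dirL a) = 1 := a.val.one_dim

lemma perp_iff (a b : QLine) : a.val.Perp b.val ↔ dirL a ⟂ dirL b := Iff.rfl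

lemma span_perp_iff (v w : Plane) : span ℝ {v} ⟂ span ℝ {w} ↔ ⟪v, w⟫ = 0 := by
  rw [Submodule.isOrtho_span]; simp

lemma eq_orth_of_perp {U W : Submodule ℝ Plane} (hU : finrank ℝ U = 1)
    (hW : finrank ℝ W = 1) (h : U ⟂ W) : U = Wᗮ := by
  have hle : U ≤ Wᗮ := Submodule.isOrtho_iff_le.mp h
  have hw : finrank ℝ (Wᗮ) = 1 := by
    have h2 := W.finrank_add_finrank_orthogonal
    rw [hW] at h2
    rw [show finrank ℝ Plane = 2 from finrank_euclideanSpace_fin] at h2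
    omega
  exact Submodule.eq_of_le_of_finrank_le hle (by rw [hU, hw])

lemma dir_eq_of_perp {a b c : QLine} (hac : a.val.Perp c.val) (hbc : b.val.Perp c.val) :
    dirL a = dirL b := by
  rw [eq_orth_of_perp (dirL_finrank a) (dirL_finrank c) hac,
    eq_orth_of_perp (dirL_finrank b) (dirL_finrank c) hbc]

lemma exists_repr (a : QLine) : ∃ p d : Plane, HasRatCoords p ∧ HasRatCoords d ∧ d ≠ 0 ∧
    p ∈ a.val.carrier ∧ dirL a = span ℝ {d} := by
  obtain ⟨p, q, hpq, hp, hq, hrp, hrq⟩ := a.prop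
  have hd0 : q - p ≠ 0 := sub_ne_zero.mpr (Ne.symm hpq)
  refine ⟨p, q - p, hrp, hrq.sub hrp, hd0, hp, ?_⟩
  have hmem : q - p ∈ a.val.carrier.direction := by
    simpa [vsub_eq_sub] using AffineSubspace.vsub_mem_direction hq hp
  have hle : span ℝ {q - p} ≤ dirL a := by
    rw [Submodule.span_singleton_le_iff_mem]; exact hmem
  exact (Submodule.eq_of_le_of_finrank_le hle
    (by rw [finrank_span_singleton hd0, dirL_finrank a])).symm

/-- Construct a rational line through a rational point with a rational direction. -/
noncomputable def mkQLine (p d : Plane) (hp : HasRatCoords p) (hd : HasRatCoords d)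
    (hd0 : d ≠ 0) : QLine :=
  ⟨⟨affineSpan ℝ {p + d, p}, by
      rw [direction_affineSpan, vectorSpan_pair, vsub_eq_sub,
        add_sub_cancel_left]
      exact finrank_span_singleton hd0⟩,
    p + d, p, by simpa using hd0,
    subset_affineSpan ℝ _ (by simp),
    subset_affineSpan ℝ _ (by simp), hp.add hd, hp⟩

lemma mkQLine_dir (p d : Plane) (hp : HasRatCoords p) (hd : HasRatCoords d) (hd0 : d ≠ 0) :
    dirL (mkQLine p d hp hd hd0) = span ℝ {d} := by
  show (affineSpan ℝ {p + d, p}).direction = _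
  rw [direction_affineSpan, vectorSpan_pair, vsub_eq_sub, add_sub_cancel_left]

lemma mkQLine_mem (p d : Plane) (hp : HasRatCoords p) (hd : HasRatCoords d) (hd0 : d ≠ 0) :
    p ∈ (mkQLine p d hp hd hd0).val.carrier :=
  subset_affineSpan ℝ _ (by simp)

/-- The family of parallel lines `p + c • d + span {rot d}` is injective in `c`. -/
lemma mk_param_inj (p d : Plane) (hp : HasRatCoords p) (hd : HasRatCoords d) (hd0 : d ≠ 0)
    {c c' : ℚ}
    (h : mkQLine (p + (c : ℝ) • d) (rot d) (hp.add (hd.ratSMul c)) hd.rot (rot_ne_zero hd0)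
       = mkQLine (p + (c' : ℝ) • d) (rot d) (hp.add (hd.ratSMul c')) hd.rot
          (rot_ne_zero hd0)) : c = c' := by
  have hmem : p + (c' : ℝ) • d ∈
      (mkQLine (p + (c : ℝ) • d) (rot d) (hp.add (hd.ratSMul c)) hd.rot
        (rot_ne_zero hd0)).val.carrier := by
    rw [h]; exact mkQLine_mem _ _ _ _ _
  have hmem2 := mkQLine_mem (p + (c : ℝ) • d) (rot d) (hp.add (hd.ratSMul c)) hd.rot
    (rot_ne_zero hd0)
  have hsub : ((c' : ℝ) - c) • d ∈ span ℝ {rot d} := by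
    rw [← mkQLine_dir (p + (c : ℝ) • d) (rot d) (hp.add (hd.ratSMul c)) hd.rot
      (rot_ne_zero hd0)]
    have := AffineSubspace.vsub_mem_direction hmem hmem2
    rw [vsub_eq_sub] at this
    have heq : (p + (c' : ℝ) • d) - (p + (c : ℝ) • d) = ((c' : ℝ) - c) • d := by
      rw [add_sub_add_left_eq_sub, ← sub_smul]
    rwa [heq] at this
  obtain ⟨t, ht⟩ := Submodule.mem_span_singleton.mp hsub
  have hinner : ⟪d, ((c' : ℝ) - c) • d⟫ = 0 := by
    rw [← ht, real_inner_smul_right, inner_rot, mul_zero]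
  rw [real_inner_smul_right] at hinner
  have hdd : ⟪d, d⟫ ≠ 0 := fun hc => hd0 (inner_self_eq_zero.mp hc)
  have : (c' : ℝ) - c = 0 := by
    rcases mul_eq_zero.mp hinner with h' | h'
    · exact h'
    · exact absurd h' hdd
  have : (c : ℝ) = (c' : ℝ) := by linarith [this]
  exact_mod_cast this

/-- The direction `span {![1, c]}` is injective in `c`. -/
def slopeVec (c : ℚ) : Plane := !₂[1, (c : ℝ)]

lemma slopeVec_apply0 (c : ℚ) : slopeVec c 0 = 1 := rfl
lemma slopeVec_apply1 (c : ℚ) : slopeVec c 1 = (c : ℝ) := rfl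

lemma slopeVec_ne_zero (c : ℚ) : slopeVec c ≠ 0 := by
  intro h
  have : slopeVec c 0 = 0 := by rw [h]; rfl
  rw [slopeVec_apply0] at this
  exact one_ne_zero this

lemma slopeVec_hrc (c : ℚ) : HasRatCoords (slopeVec c) := fun i => match i with
  | 0 => ⟨1, by rw [slopeVec_apply0]; norm_num⟩
  | 1 => ⟨c, rfl⟩

lemma slopeVec_span_inj {c c' : ℚ} (h : span ℝ {slopeVec c} = span ℝ {slopeVec c'}) :
    c = c' := by
  have hmem : slopeVec c' ∈ span ℝ {slopeVec c} := by
    rw [h]; exact Submodule.mem_span_singleton_self _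
  obtain ⟨t, ht⟩ := Submodule.mem_span_singleton.mp hmem
  have h0 : (t • slopeVec c) 0 = slopeVec c' 0 := by rw [ht]
  have h1 : (t • slopeVec c) 1 = slopeVec c' 1 := by rw [ht]
  have ht1 : t * 1 = 1 := by
    rw [show (t • slopeVec c) 0 = t * slopeVec c 0 from rfl, slopeVec_apply0] at h0
    rw [slopeVec_apply0] at h0
    simpa using h0
  have : t = 1 := by simpa using ht1
  rw [show (t • slopeVec c) 1 = t * slopeVec c 1 from rfl, slopeVec_apply1,
    slopeVec_apply1, this, one_mul] at h1
  exact Rat.cast_injective (α := ℝ) h1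

lemma zero_hrc : HasRatCoords (0 : Plane) := fun _ => ⟨0, by norm_num⟩

/-- Pigeonhole: given `n+1` distinct values and only `n` forbidden ones, some value avoids
all forbidden ones. -/
lemma pigeon {α : Type*} {n : ℕ} (f : Fin (n + 1) → α) (hf : Function.Injective f)
    (v : Fin n → α) : ∃ j, ∀ i, f j ≠ v i := by
  by_contra hcon
  push_neg at hcon
  choose g hg using hcon
  have hginj : Function.Injective g := by
    intro j j' e
    apply hf
    rw [hg, e, ← hg]
  have := Fintype.card_le_of_injective g hginj
  simp [Fintype.card_fin] at this

/-! #### Realization lemmas -/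

lemma realize_oBF {n : ℕ} {i j : Fin n} {v : Empty → QLine} {xs : Fin n → QLine} :
    (oBF i j).Realize v xs ↔ (xs i).val.Perp (xs j).val := by
  simp only [oBF, BoundedFormula.realize_rel₂, Term.realize_var, Sum.elim_inr]
  exact Iff.rfl

lemma realize_andAll {n : ℕ} (l : List (L.BoundedFormula Empty n)) (v : Empty → QLine)
    (xs : Fin n → QLine) :
    (andAll l).Realize v xs ↔ ∀ φ ∈ l, φ.Realize v xs := by
  induction l with
  | nil => simp [andAll]
  | cons φ l ih => simp [andAll, ih]

end Aux

lemma model_alls {n : ℕ} {φ : L.BoundedFormula Empty n} :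
    QLine ⊨ φ.alls ↔ ∀ xs : Fin n → QLine, φ.Realize default xs :=
  BoundedFormula.realize_alls

/-- F²_ℚ is a model of SAPP. -/
theorem statement_1 : QLine ⊨ SAPP := by
  rw [Theory.model_iff]
  intro φ hφ
  simp only [SAPP, Set.mem_union, Set.mem_setOf_eq, Set.mem_insert_iff,
    Set.mem_singleton_iff] at hφ
  rcases hφ with (⟨n, hn, rfl⟩ | ⟨n, hn, rfl⟩) | rfl | rfl | rfl | rfl
  · -- lam1
    rw [lam1, model_alls]
    intro xs
    rw [BoundedFormula.realize_imp]
    intro _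
    rw [BoundedFormula.realize_ex]
    obtain ⟨p, d, hp, hd, hd0, hmem, hdir⟩ := exists_repr (xs (Fin.last n))
    set f : Fin (n + 1) → QLine := fun j =>
      mkQLine (p + (((j : ℕ) : ℚ) : ℝ) • d) (rot d) (hp.add (hd.ratSMul _)) hd.rot
        (rot_ne_zero hd0) with hf
    have hfinj : Function.Injective f := by
      intro j j' e
      have h2 := mk_param_inj p d hp hd hd0 e
      exact Fin.ext (by exact_mod_cast h2)
    obtain ⟨j, hj⟩ := pigeon f hfinj (fun i => xs i.castSucc)
    refine ⟨f j, ?_⟩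
    rw [BoundedFormula.realize_inf]
    constructor
    · rw [realize_andAll]
      intro ψ hψ
      rw [List.mem_map] at hψ
      obtain ⟨i, _, rfl⟩ := hψ
      rw [BoundedFormula.realize_not, BoundedFormula.realize_bdEqual]
      simp only [Function.comp_apply, Term.realize_var, Sum.elim_inr, Fin.snoc_last,
        Fin.snoc_castSucc]
      exact hj i
    · rw [realize_oBF]
      simp only [Fin.snoc_last, Fin.snoc_castSucc]
      rw [perp_iff, hdir, show dirL (f j) = Submodule.span ℝ {rot d} from
        mkQLine_dir _ _ _ _ _, span_perp_iff]
      exact inner_rot d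
  · -- lam2
    rw [lam2, model_alls]
    intro xs
    rw [BoundedFormula.realize_ex]
    set g : Fin (n + 1) → QLine := fun j =>
      mkQLine 0 (slopeVec ((j : ℕ) : ℚ)) zero_hrc (slopeVec_hrc _) (slopeVec_ne_zero _) with hg
    by_contra hcon
    push_neg at hcon
    have hch : ∀ j : Fin (n + 1), ∃ i : Fin n, (g j).val.Perp (xs i).val := by
      intro j
      have hc := hcon (g j)
      rw [realize_andAll] at hc
      push_neg at hc
      obtain ⟨ψ, hψmem, hψ⟩ := hc
      rw [List.mem_map] at hψmem
      obtain ⟨i, _, rfl⟩ := hψmem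
      rw [BoundedFormula.realize_not, not_not, realize_oBF] at hψ
      simp only [Fin.snoc_last, Fin.snoc_castSucc] at hψ
      exact ⟨i, hψ⟩
    choose w hw using hch
    have hwinj : Function.Injective w := by
      intro j j' e
      have h1 : dirL (g j) = dirL (g j') := by
        refine dir_eq_of_perp (hw j) ?_
        rw [e]
        exact hw j'
      have h2 : Submodule.span ℝ {slopeVec ((j : ℕ) : ℚ)}
          = Submodule.span ℝ {slopeVec ((j' : ℕ) : ℚ)} := by
        rw [show dirL (g j) = Submodule.span ℝ {slopeVec ((j : ℕ) : ℚ)} from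
          mkQLine_dir _ _ _ _ _, show dirL (g j') = Submodule.span ℝ {slopeVec ((j' : ℕ) : ℚ)}
          from mkQLine_dir _ _ _ _ _] at h1
        exact h1
      have h3 := slopeVec_span_inj h2
      exact Fin.ext (by exact_mod_cast h3)
    have hcard := Fintype.card_le_of_injective w hwinj
    simp [Fintype.card_fin] at hcard
  · -- lam3
    rw [lam3, model_alls]
    intro xs
    rw [BoundedFormula.realize_not, realize_oBF]
    intro h
    rw [perp_iff, Submodule.isOrtho_self] at h
    have h1 := dirL_finrank (xs 0)
    rw [h] at h1
    simp at h1
  · -- lam4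
    rw [lam4, model_alls]
    intro xs
    rw [BoundedFormula.realize_imp, realize_oBF, realize_oBF]
    exact fun h => h.symm
  · -- lam5
    rw [lam5, model_alls]
    intro xs
    rw [BoundedFormula.realize_ex]
    obtain ⟨p, d, hp, hd, hd0, hmem, hdir⟩ := exists_repr (xs 0)
    refine ⟨mkQLine p (rot d) hp hd.rot (rot_ne_zero hd0), ?_⟩
    rw [realize_oBF]
    have hsnoc0 : (Fin.snoc xs (mkQLine p (rot d) hp hd.rot (rot_ne_zero hd0)) : Fin 2 → QLine)
        0 = xs 0 := by
      rw [show (0 : Fin 2) = Fin.castSucc 0 from rfl, Fin.snoc_castSucc]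
    have hsnoc1 : (Fin.snoc xs (mkQLine p (rot d) hp hd.rot (rot_ne_zero hd0)) : Fin 2 → QLine)
        1 = mkQLine p (rot d) hp hd.rot (rot_ne_zero hd0) := by
      rw [show (1 : Fin 2) = Fin.last 1 from rfl, Fin.snoc_last]
    rw [hsnoc0, hsnoc1, perp_iff, hdir, mkQLine_dir, span_perp_iff]
    exact inner_rot d
  · -- lam6
    rw [lam6, model_alls]
    intro xs
    rw [BoundedFormula.realize_imp, BoundedFormula.realize_inf, BoundedFormula.realize_inf,
      realize_oBF, realize_oBF, realize_oBF, realize_oBF]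
    rintro ⟨⟨hxz, hyz⟩, hxt⟩
    rw [perp_iff] at hxt ⊢
    rw [dir_eq_of_perp hyz hxz]
    exact hxt
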